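/- For the nested Shannon entropy with attribute set N, attribute prior ν ∈ Δ(N), conditionals μ_i ∈ Δ(Θ), and parameters ζ > 0, η_i > 0, the Fenchel conjugate is H*_NS(x) = ζ log( Σ_{i∈N} ν(i) ( Σ_{θ∈Θ} μ_i(θ) e^{x(θ)/η_i} )^{η_i/ζ} ) for all x ∈ ℝ^Θ; equivalently, the biconjugate of the nested-logit surplus function equals H_NS(p) = inf { ζ D_KL(r ∥ ν) + Σ_i r(i) η_i D_KL(q_i ∥ μ_i) } over r ∈ Δ(N) and kernels q ∈ Δ(Θ)^N with Σ_i r(i) q_i = p. -/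

import Mathlib

open scoped ENNReal BigOperators

/-- A probability mass function on a finite set. -/
def IsPMF {Ω : Type*} [Fintype Ω] (p : Ω → ℝ) : Prop :=
  (∀ ω, 0 ≤ p ω) ∧ ∑ ω, p ω = 1

open Classical in
/-- Kullback–Leibler divergence on a finite set, with the conventions
`0 · log(0/0) = 0` and `t · log(t/0) = +∞` for `t > 0`. -/
noncomputable def KL {Ω : Type*} [Fintype Ω] (p q : Ω → ℝ) : ℝ≥0∞ :=
  if ∀ ω, q ω = 0 → p ω = 0 then
    ENNReal.ofReal (∑ ω, p ω * Real.log (p ω / q ω))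
  else ⊤

/-- The nested Shannon entropy: the cheapest extension of the posterior `p` to
state–attribute pairs, with an across-attribute KL cost scaled by `ζ` and
within-attribute KL costs scaled by `η_i`. -/
noncomputable def HNS {Θ N : Type*} [Fintype Θ] [Fintype N]
    (ν : N → ℝ) (μ : N → Θ → ℝ) (ζ : ℝ) (η : N → ℝ) (p : Θ → ℝ) : ℝ≥0∞ :=
  ⨅ rq : {rq : (N → ℝ) × (N → Θ → ℝ) //
      IsPMF rq.1 ∧ (∀ i, IsPMF (rq.2 i)) ∧ (∀ θ, ∑ i, rq.1 i * rq.2 i θ = p θ)},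
    ENNReal.ofReal ζ * KL rq.1.1 ν
      + ∑ i, ENNReal.ofReal (rq.1.1 i * η i) * KL (rq.1.2 i) (μ i)

/-! ### Auxiliary lemmas -/

/-- Pointwise entropy inequality: `q - s ≤ q log(q/s)`. -/
lemma aux_mul_log_div_ge (q s : ℝ) (hq : 0 ≤ q) (hs : 0 ≤ s) (h : s = 0 → q = 0) :
    q - s ≤ q * Real.log (q / s) := by
  rcases eq_or_lt_of_le hq with h0 | hqpos
  · rw [← h0, zero_mul, zero_sub]
    linarith
  · have hs0 : s ≠ 0 := fun e => absurd (h e) (ne_of_gt hqpos)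
    have hspos : 0 < s := lt_of_le_of_ne hs (Ne.symm hs0)
    have hlog := Real.log_le_sub_one_of_pos (div_pos hspos hqpos)
    have hkey : Real.log (q / s) = - Real.log (s / q) := by
      rw [← Real.log_inv]
      congr 1
      field_simp
    have hmul := mul_le_mul_of_nonneg_left hlog hq
    have hcanc : q * (s / q) = s := by field_simp
    rw [hkey]
    nlinarith
/-- Nonnegativity of the (real-valued) KL sum. -/
lemma aux_kl_nonneg {Ω : Type*} [Fintype Ω] {q s : Ω → ℝ} (hq : IsPMF q) (hs : IsPMF s)
    (habs : ∀ ω, s ω = 0 → q ω = 0) : 0 ≤ ∑ ω, q ω * Real.log (q ω / s ω) := by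
  have h : ∑ ω, (q ω - s ω) ≤ ∑ ω, q ω * Real.log (q ω / s ω) :=
    Finset.sum_le_sum fun ω _ => aux_mul_log_div_ge _ _ (hq.1 ω) (hs.1 ω) (habs ω)
  have h2 : ∑ ω, (q ω - s ω) = 0 := by
    rw [Finset.sum_sub_distrib, hq.2, hs.2, sub_self]
  linarith

/-- Positivity of the partition function. -/
lemma aux_Z_pos {Ω : Type*} [Fintype Ω] {m : Ω → ℝ} (hm : IsPMF m) (e : Ω → ℝ) :
    0 < ∑ ω, m ω * Real.exp (e ω) := by
  have hex : ∃ ω, 0 < m ω := by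
    by_contra hcon
    push_neg at hcon
    have : ∑ ω, m ω = 0 := Finset.sum_eq_zero fun ω _ => le_antisymm (hcon ω) (hm.1 ω)
    rw [hm.2] at this; norm_num at this
  obtain ⟨ω0, hω0⟩ := hex
  exact Finset.sum_pos' (fun ω _ => mul_nonneg (hm.1 ω) (Real.exp_pos _).le)
    ⟨ω0, Finset.mem_univ _, mul_pos hω0 (Real.exp_pos _)⟩

/-- Gibbs variational inequality on a finite set. -/
lemma aux_gibbs {Ω : Type*} [Fintype Ω] {q m : Ω → ℝ} (hq : IsPMF q) (hm : IsPMF m)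
    (habs : ∀ ω, m ω = 0 → q ω = 0) {η : ℝ} (hη : 0 < η) (x : Ω → ℝ) :
    ∑ ω, x ω * q ω ≤ η * (∑ ω, q ω * Real.log (q ω / m ω))
      + η * Real.log (∑ ω, m ω * Real.exp (x ω / η)) := by
  set Z : ℝ := ∑ ω, m ω * Real.exp (x ω / η) with hZdef
  have hZ : 0 < Z := aux_Z_pos hm _
  set s : Ω → ℝ := fun ω => m ω * Real.exp (x ω / η) / Z with hsdef
  have hsPMF : IsPMF s := by
    constructor
    · intro ω; exact div_nonneg (mul_nonneg (hm.1 ω) (Real.exp_pos _).le) hZ.le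
    · rw [show ∑ ω, s ω = (∑ ω, m ω * Real.exp (x ω / η)) / Z from (Finset.sum_div _ _ _).symm,
        ← hZdef, div_self hZ.ne']
  have habs' : ∀ ω, s ω = 0 → q ω = 0 := by
    intro ω hsω
    apply habs
    have : m ω * Real.exp (x ω / η) = 0 := by
      have := hsω
      rw [hsdef] at this
      simp only [div_eq_zero_iff] at this
      rcases this with h | h
      · exact h
      · exact absurd h hZ.ne'
    rcases mul_eq_zero.mp this with h | h
    · exact h
    · exact absurd h (Real.exp_ne_zero _)
  have key : ∀ ω, q ω * Real.log (q ω / s ω)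
      = q ω * Real.log (q ω / m ω) - x ω * q ω / η + q ω * Real.log Z := by
    intro ω
    rcases eq_or_lt_of_le (hq.1 ω) with h0 | hqpos
    · simp [← h0]
    · have hm0 : m ω ≠ 0 := fun e => absurd (habs ω e) (ne_of_gt hqpos)
      have hmpos : 0 < m ω := lt_of_le_of_ne (hm.1 ω) (Ne.symm hm0)
      have hq1 : q ω / s ω = q ω / m ω * Z / Real.exp (x ω / η) := by
        rw [hsdef]
        field_simp
      rw [hq1, Real.log_div (by positivity) (Real.exp_ne_zero _),
        Real.log_mul (by positivity) hZ.ne', Real.log_exp]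
      ring
  have hsum : 0 ≤ (∑ ω, q ω * Real.log (q ω / m ω)) - (∑ ω, x ω * q ω) / η + Real.log Z := by
    have h0 := aux_kl_nonneg hq hsPMF habs'
    have heq : ∑ ω, q ω * Real.log (q ω / s ω)
        = (∑ ω, q ω * Real.log (q ω / m ω)) - (∑ ω, x ω * q ω) / η + Real.log Z := by
      rw [Finset.sum_congr rfl (fun ω _ => key ω)]
      rw [Finset.sum_add_distrib, Finset.sum_sub_distrib, ← Finset.sum_div, ← Finset.sum_mul,
        hq.2, one_mul]
    linarith [heq ▸ h0]
  have h2 : (∑ ω, x ω * q ω) / η ≤ (∑ ω, q ω * Real.log (q ω / m ω)) + Real.log Z := by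
    linarith
  calc ∑ ω, x ω * q ω = η * ((∑ ω, x ω * q ω) / η) := by field_simp
    _ ≤ η * ((∑ ω, q ω * Real.log (q ω / m ω)) + Real.log Z) :=
        mul_le_mul_of_nonneg_left h2 hη.le
    _ = η * (∑ ω, q ω * Real.log (q ω / m ω)) + η * Real.log Z := by ring

/-- The optimal tilted distribution achieves equality, pointwise version. -/
lemma aux_opt_term {m xθ ηv Z : ℝ} (hm : 0 ≤ m) (hZ : 0 < Z) :
    (m * Real.exp (xθ / ηv) / Z) * Real.log ((m * Real.exp (xθ / ηv) / Z) / m)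
      = (xθ / ηv) * (m * Real.exp (xθ / ηv) / Z)
        - (m * Real.exp (xθ / ηv) / Z) * Real.log Z := by
  rcases eq_or_lt_of_le hm with h0 | hm
  · simp [← h0]
  · have hdiv : (m * Real.exp (xθ / ηv) / Z) / m = Real.exp (xθ / ηv) / Z := by
      field_simp
    rw [hdiv, Real.log_div (Real.exp_ne_zero _) hZ.ne', Real.log_exp]
    ring

/-- Exchanging sums for mixtures. -/
lemma aux_swap {Θ N : Type*} [Fintype Θ] [Fintype N] (x : Θ → ℝ) (r : N → ℝ) (q : N → Θ → ℝ) :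
    ∑ θ, x θ * ∑ i, r i * q i θ = ∑ i, r i * ∑ θ, x θ * q i θ := by
  simp only [Finset.mul_sum]
  rw [Finset.sum_comm]
  refine Finset.sum_congr rfl fun i _ => Finset.sum_congr rfl fun θ _ => by ring

lemma aux_alg {u v w l : ℝ} (hv : v ≠ 0) : w * v * (u / v - l) = w * u - v * l * w := by
  field_simp

lemma aux_ereal_sub_le (a c : ℝ) (K : ℝ≥0∞) (h : ENNReal.ofReal (a - c) ≤ K) :
    (a : EReal) - (K : EReal) ≤ (c : EReal) := by
  rcases eq_or_ne K ⊤ with rfl | hK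
  · rw [EReal.coe_ennreal_top]
    have hb : (a : EReal) - ⊤ = ⊥ := by
      rw [sub_eq_add_neg]
      simp
    rw [hb]
    exact bot_le
  · have h2 : a - c ≤ K.toReal := by
      rcases le_or_gt (a - c) 0 with h0 | h0
      · exact h0.trans ENNReal.toReal_nonneg
      · exact (ENNReal.ofReal_le_iff_le_toReal hK).mp h
    have hKeq : (K : EReal) = ((K.toReal : ℝ) : EReal) := by
      conv_lhs => rw [← ENNReal.ofReal_toReal hK]
      rw [EReal.coe_ennreal_ofReal, max_eq_left ENNReal.toReal_nonneg]
    rw [hKeq, ← EReal.coe_sub]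
    exact_mod_cast by linarith

lemma aux_le_ereal_sub (a c : ℝ) (K : ℝ≥0∞) (hac : c ≤ a)
    (h : K ≤ ENNReal.ofReal (a - c)) :
    (c : EReal) ≤ (a : EReal) - (K : EReal) := by
  have hK : K ≠ ⊤ := ne_top_of_le_ne_top ENNReal.ofReal_ne_top h
  have h2 : K.toReal ≤ a - c := ENNReal.toReal_le_of_le_ofReal (by linarith) h
  have hKeq : (K : EReal) = ((K.toReal : ℝ) : EReal) := by
    conv_lhs => rw [← ENNReal.ofReal_toReal hK]
    rw [EReal.coe_ennreal_ofReal, max_eq_left ENNReal.toReal_nonneg]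
  rw [hKeq, ← EReal.coe_sub]
  exact_mod_cast by linarith

/-- The Fenchel conjugate of the nested Shannon entropy is the generalized nested-logit
surplus function:
`H*_NS(x) = ζ log( Σ_i ν(i) ( Σ_θ μ_i(θ) e^{x(θ)/η_i} )^{η_i/ζ} )`. -/
theorem stmt17 {Θ N : Type*} [Fintype Θ] [Fintype N] [Nonempty Θ] [Nonempty N]
    (ν : N → ℝ) (μ : N → Θ → ℝ) (ζ : ℝ) (η : N → ℝ)
    (hν : IsPMF ν) (hνpos : ∀ i, 0 < ν i) (hμ : ∀ i, IsPMF (μ i))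
    (hζ : 0 < ζ) (hη : ∀ i, 0 < η i) (x : Θ → ℝ) :
    (⨆ p : {p : Θ → ℝ // IsPMF p},
        ((∑ θ, x θ * p.1 θ : ℝ) : EReal) - ((HNS ν μ ζ η p.1 : ℝ≥0∞) : EReal))
      = ((ζ * Real.log (∑ i, ν i *
            (∑ θ, μ i θ * Real.exp (x θ / η i)) ^ (η i / ζ)) : ℝ) : EReal) := by
  classical
  set Z : N → ℝ := fun i => ∑ θ, μ i θ * Real.exp (x θ / η i) with hZdef
  have hZpos : ∀ i, 0 < Z i := fun i => aux_Z_pos (hμ i) _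
  set y : N → ℝ := fun i => η i * Real.log (Z i) with hydef
  have hrpow : ∀ i, Z i ^ (η i / ζ) = Real.exp (y i / ζ) := by
    intro i
    rw [Real.rpow_def_of_pos (hZpos i), hydef]
    congr 1
    ring
  set W : ℝ := ∑ i, ν i * Real.exp (y i / ζ) with hWdef
  have hWpos : 0 < W := aux_Z_pos hν _
  set c : ℝ := ζ * Real.log W with hcdef
  have hRHS : ζ * Real.log (∑ i, ν i * (∑ θ, μ i θ * Real.exp (x θ / η i)) ^ (η i / ζ)) = c := by
    rw [hcdef, hWdef]
    congr 2
    exact Finset.sum_congr rfl fun i _ => by rw [← hrpow i]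
  rw [hRHS]
  have hνabs : ∀ i, ν i = 0 → (fun _ : N => (0:ℝ)) i = 0 := fun i _ => rfl
  apply le_antisymm
  · -- upper bound
    apply iSup_le
    rintro ⟨p, hp⟩
    apply aux_ereal_sub_le
    unfold HNS
    apply le_iInf
    rintro ⟨⟨r, q⟩, hr, hq, hmix⟩
    simp only
    have hKLr : KL r ν = ENNReal.ofReal (∑ i, r i * Real.log (r i / ν i)) := by
      unfold KL
      rw [if_pos (fun i hi => absurd hi (hνpos i).ne')]
    by_cases hgood : ∀ i, r i ≠ 0 → ∀ θ, μ i θ = 0 → q i θ = 0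
    · set A : ℝ := ∑ i, r i * Real.log (r i / ν i) with hAdef
      have hA : 0 ≤ A := aux_kl_nonneg hr hν fun i hi => absurd hi (hνpos i).ne'
      set b : N → ℝ := fun i => ∑ θ, q i θ * Real.log (q i θ / μ i θ) with hbdef
      set t : N → ℝ := fun i => if r i = 0 then 0 else r i * η i * b i with htdef
      have ht_nonneg : ∀ i, 0 ≤ t i := by
        intro i
        rw [htdef]
        by_cases hri : r i = 0
        · simp [hri]
        · simp only [hri, if_false]
          have hb : 0 ≤ b i := aux_kl_nonneg (hq i) (hμ i) (hgood i hri)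
          have hr0 : 0 < r i := lt_of_le_of_ne (hr.1 i) (Ne.symm hri)
          exact mul_nonneg (mul_nonneg hr0.le (hη i).le) hb
      have hterm : ∀ i, ENNReal.ofReal (t i)
          ≤ ENNReal.ofReal (r i * η i) * KL (q i) (μ i) := by
        intro i
        by_cases hri : r i = 0
        · simp [htdef, hri]
        · have hKLq : KL (q i) (μ i) = ENNReal.ofReal (b i) := by
            unfold KL
            rw [if_pos (hgood i hri)]
          rw [hKLq, htdef]
          simp only [hri, if_false]
          rw [mul_assoc, ← ENNReal.ofReal_mul (mul_nonneg (hr.1 i) (hη i).le)]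
          rw [mul_assoc]
      have hreal : ∑ θ, x θ * p θ - c ≤ ζ * A + ∑ i, t i := by
        have ha : ∑ θ, x θ * p θ = ∑ i, r i * ∑ θ, x θ * q i θ := by
          rw [← aux_swap x r q]
          exact Finset.sum_congr rfl fun θ _ => by rw [hmix θ]
        have hstep : ∀ i, r i * ∑ θ, x θ * q i θ ≤ t i + r i * y i := by
          intro i
          by_cases hri : r i = 0
          · simp [htdef, hri]
          · have hgb := aux_gibbs (hq i) (hμ i) (hgood i hri) (hη i) x
            have hrpos : 0 ≤ r i := hr.1 i
            have := mul_le_mul_of_nonneg_left hgb hrpos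
            rw [htdef]
            simp only [hri, if_false]
            calc r i * ∑ θ, x θ * q i θ
                ≤ r i * (η i * b i + η i * Real.log (Z i)) := by
                  rw [hbdef]; exact this
              _ = r i * η i * b i + r i * y i := by rw [hydef]; ring
        have h1 : ∑ i, r i * ∑ θ, x θ * q i θ ≤ ∑ i, (t i + r i * y i) :=
          Finset.sum_le_sum fun i _ => hstep i
        have h2 : ∑ i, y i * r i ≤ ζ * A + ζ * Real.log W := by
          have := aux_gibbs hr hν (fun i hi => absurd hi (hνpos i).ne') hζ y
          rw [hAdef, hWdef]
          exact this
        have h3 : ∑ i, (t i + r i * y i) = ∑ i, t i + ∑ i, y i * r i := by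
          rw [Finset.sum_add_distrib]
          congr 1
          exact Finset.sum_congr rfl fun i _ => by ring
        rw [hcdef, ha]
        linarith
      calc ENNReal.ofReal (∑ θ, x θ * p θ - c)
          ≤ ENNReal.ofReal (ζ * A + ∑ i, t i) := ENNReal.ofReal_le_ofReal hreal
        _ = ENNReal.ofReal (ζ * A) + ENNReal.ofReal (∑ i, t i) :=
            ENNReal.ofReal_add (by positivity) (Finset.sum_nonneg fun i _ => ht_nonneg i)
        _ = ENNReal.ofReal ζ * ENNReal.ofReal A + ∑ i, ENNReal.ofReal (t i) := by
            rw [ENNReal.ofReal_mul hζ.le, ENNReal.ofReal_sum_of_nonneg fun i _ => ht_nonneg i]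
        _ ≤ ENNReal.ofReal ζ * KL r ν
            + ∑ i, ENNReal.ofReal (r i * η i) * KL (q i) (μ i) := by
            rw [hKLr]
            exact add_le_add le_rfl (Finset.sum_le_sum fun i _ => hterm i)
    · -- some bad i: KL is ⊤
      push_neg at hgood
      obtain ⟨i, hri, θ0, hμ0, hq0⟩ := hgood
      have hKLtop : KL (q i) (μ i) = ⊤ := by
        unfold KL
        rw [if_neg]
        push_neg
        exact ⟨θ0, hμ0, hq0⟩
      have hcoef : ENNReal.ofReal (r i * η i) ≠ 0 := by
        have h1 : 0 < r i := lt_of_le_of_ne (hr.1 i) (Ne.symm hri)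
        exact (ENNReal.ofReal_pos.mpr (mul_pos h1 (hη i))).ne'
      have htop : ENNReal.ofReal (r i * η i) * KL (q i) (μ i) = ⊤ := by
        rw [hKLtop, ENNReal.mul_top hcoef]
      have hsumtop : (∑ j, ENNReal.ofReal (r j * η j) * KL (q j) (μ j)) = ⊤ := by
        rw [eq_top_iff, ← htop]
        exact Finset.single_le_sum
          (f := fun j => ENNReal.ofReal (r j * η j) * KL (q j) (μ j))
          (fun j _ => zero_le) (Finset.mem_univ i)
      rw [hsumtop, add_top]
      exact le_top
  · -- lower bound
    set qs : N → Θ → ℝ := fun i θ => μ i θ * Real.exp (x θ / η i) / Z i with hqsdef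
    set rs : N → ℝ := fun i => ν i * Real.exp (y i / ζ) / W with hrsdef
    have hqsPMF : ∀ i, IsPMF (qs i) := by
      intro i
      constructor
      · intro θ
        exact div_nonneg (mul_nonneg ((hμ i).1 θ) (Real.exp_pos _).le) (hZpos i).le
      · rw [hqsdef]
        simp only
        rw [← Finset.sum_div, div_self (hZpos i).ne']
    have hrsPMF : IsPMF rs := by
      constructor
      · intro i
        exact div_nonneg (mul_nonneg (hν.1 i) (Real.exp_pos _).le) hWpos.le
      · rw [hrsdef]
        simp only
        rw [← Finset.sum_div, div_self hWpos.ne']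
    set ps : Θ → ℝ := fun θ => ∑ i, rs i * qs i θ with hpsdef
    have hpsPMF : IsPMF ps := by
      constructor
      · intro θ
        exact Finset.sum_nonneg fun i _ => mul_nonneg (hrsPMF.1 i) ((hqsPMF i).1 θ)
      · rw [hpsdef]
        simp only
        rw [Finset.sum_comm]
        calc ∑ i, ∑ θ, rs i * qs i θ = ∑ i, rs i * ∑ θ, qs i θ := by
              exact Finset.sum_congr rfl fun i _ => (Finset.mul_sum _ _ _).symm
          _ = ∑ i, rs i := Finset.sum_congr rfl fun i _ => by rw [(hqsPMF i).2, mul_one]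
          _ = 1 := hrsPMF.2
    refine le_trans ?_ (le_iSup _ (⟨ps, hpsPMF⟩ : {p : Θ → ℝ // IsPMF p}))
    simp only
    set a : ℝ := ∑ θ, x θ * ps θ with hadef
    -- KL values for the optimal pair
    set A : ℝ := ∑ i, rs i * Real.log (rs i / ν i) with hAdef
    set b : N → ℝ := fun i => ∑ θ, qs i θ * Real.log (qs i θ / μ i θ) with hbdef
    have hbeq : ∀ i, b i = (∑ θ, x θ * qs i θ) / η i - Real.log (Z i) := by
      intro i
      rw [hbdef]
      simp only
      have key : ∀ θ, qs i θ * Real.log (qs i θ / μ i θ)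
          = (x θ / η i) * qs i θ - qs i θ * Real.log (Z i) := by
        intro θ
        rw [hqsdef]
        exact aux_opt_term ((hμ i).1 θ) (hZpos i)
      rw [Finset.sum_congr rfl fun θ _ => key θ, Finset.sum_sub_distrib, ← Finset.sum_mul,
        (hqsPMF i).2, one_mul]
      congr 1
      rw [Finset.sum_div]
      exact Finset.sum_congr rfl fun θ _ => by ring
    have hAeq : A = (∑ i, y i * rs i) / ζ - Real.log W := by
      rw [hAdef]
      have key : ∀ i, rs i * Real.log (rs i / ν i)
          = (y i / ζ) * rs i - rs i * Real.log W := by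
        intro i
        rw [hrsdef]
        exact aux_opt_term (hν.1 i) hWpos
      rw [Finset.sum_congr rfl fun i _ => key i, Finset.sum_sub_distrib, ← Finset.sum_mul,
        hrsPMF.2, one_mul]
      congr 1
      rw [Finset.sum_div]
      exact Finset.sum_congr rfl fun i _ => by ring
    have hA0 : 0 ≤ A := aux_kl_nonneg hrsPMF hν fun i hi => absurd hi (hνpos i).ne'
    have hb0 : ∀ i, 0 ≤ b i := by
      intro i
      refine aux_kl_nonneg (hqsPMF i) (hμ i) ?_
      intro θ hθ
      rw [hqsdef]
      simp [hθ]
    -- total cost equals a - c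
    have hcost : ζ * A + ∑ i, rs i * η i * b i = a - c := by
      have h1 : ∑ i, rs i * η i * b i = (∑ i, rs i * ∑ θ, x θ * qs i θ) - ∑ i, y i * rs i := by
        rw [← Finset.sum_sub_distrib]
        refine Finset.sum_congr rfl fun i _ => ?_
        rw [hbeq i, show y i = η i * Real.log (Z i) from rfl]
        exact aux_alg (hη i).ne'
      have h2 : ζ * A = ∑ i, y i * rs i - ζ * Real.log W := by
        rw [hAeq, mul_sub]
        congr 1
        field_simp
      have h3 : a = ∑ i, rs i * ∑ θ, x θ * qs i θ := by
        rw [hadef, hpsdef]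
        exact aux_swap x rs qs
      rw [h1, h2, h3, hcdef]
      ring
    have hcost_nonneg : 0 ≤ ζ * A + ∑ i, rs i * η i * b i := by
      have : ∀ i, 0 ≤ rs i * η i * b i := fun i =>
        mul_nonneg (mul_nonneg (hrsPMF.1 i) (hη i).le) (hb0 i)
      have hs := Finset.sum_nonneg fun i (_ : i ∈ Finset.univ) => this i
      positivity
    have hac : c ≤ a := by linarith [hcost ▸ hcost_nonneg]
    apply aux_le_ereal_sub _ _ _ hac
    -- HNS ps ≤ ofReal (a - c)
    have hKLrs : KL rs ν = ENNReal.ofReal A := by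
      unfold KL
      rw [if_pos (fun i hi => absurd hi (hνpos i).ne')]
    have hKLqs : ∀ i, KL (qs i) (μ i) = ENNReal.ofReal (b i) := by
      intro i
      unfold KL
      rw [if_pos]
      intro θ hθ
      rw [hqsdef]
      simp [hθ]
    have hcost' : ENNReal.ofReal ζ * KL rs ν
        + ∑ i, ENNReal.ofReal (rs i * η i) * KL (qs i) (μ i)
        = ENNReal.ofReal (a - c) := by
      rw [hKLrs]
      rw [Finset.sum_congr rfl fun i (_ : i ∈ Finset.univ) => by rw [hKLqs i]]
      rw [← ENNReal.ofReal_mul hζ.le]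
      have : ∀ i, ENNReal.ofReal (rs i * η i) * ENNReal.ofReal (b i)
          = ENNReal.ofReal (rs i * η i * b i) := fun i =>
        (ENNReal.ofReal_mul (mul_nonneg (hrsPMF.1 i) (hη i).le)).symm
      rw [Finset.sum_congr rfl fun i _ => this i,
        ← ENNReal.ofReal_sum_of_nonneg fun i _ =>
          mul_nonneg (mul_nonneg (hrsPMF.1 i) (hη i).le) (hb0 i),
        ← ENNReal.ofReal_add (by positivity)
          (Finset.sum_nonneg fun i _ =>
            mul_nonneg (mul_nonneg (hrsPMF.1 i) (hη i).le) (hb0 i)),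
        hcost]
    calc HNS ν μ ζ η ps
        ≤ ENNReal.ofReal ζ * KL rs ν
          + ∑ i, ENNReal.ofReal (rs i * η i) * KL (qs i) (μ i) := by
          unfold HNS
          refine iInf_le_of_le ⟨(rs, qs), hrsPMF, hqsPMF, fun θ => rfl⟩ ?_
          exact le_rfl
      _ = ENNReal.ofReal (a - c) := hcost'
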